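/- arXiv:2312.02089 — 2 statements merged into one kernel-verified Lean document; each statement's English description precedes it below -/
import Mathlib

section
/- Let (X, π) be a weighted n-partite simplicial complex and let I, J ⊆ [n] be disjoint, with I ∪ J ⊆ [n] and every link graph of (X, π) connected. Then cos(U_I, U_J) ≤ ε^{I→J}, where U_I and U_J are the subspaces of functions on the top faces depending only on the coordinates outside I and outside J respectively. -/
open Finset
open scoped Classical

noncomputable section

namespace PaperFormal

/-- A weighted `n`-partite simplicial complex: a nonempty finite set `Ω` of `n`-tuples
(the top faces, each tuple picking one element from each side `U i`) together with a
full-support probability distribution `π` on it. -/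
structure WPC (n : ℕ) (U : Fin n → Type*) [∀ i, Fintype (U i)] [∀ i, DecidableEq (U i)] where
  Ω : Finset (∀ i, U i)
  nonempty : Ω.Nonempty
  π : (∀ i, U i) → ℝ
  nonneg : ∀ ω, 0 ≤ π ω
  support : ∀ ω, 0 < π ω ↔ ω ∈ Ω
  sum_one : ∑ ω : ∀ i, U i, π ω = 1

/-- Partial assignments to the coordinates in `S`. -/
abbrev PAssign {n : ℕ} (U : Fin n → Type*) (S : Finset (Fin n)) : Type _ :=
  ∀ i : {x : Fin n // x ∈ S}, U i.1

variable {n : ℕ} {U : Fin n → Type*} [∀ i, Fintype (U i)] [∀ i, DecidableEq (U i)]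

/-- Restriction of a tuple to the coordinates in `S`. -/
def restr (S : Finset (Fin n)) (ω : ∀ i, U i) : PAssign U S := fun i => ω i.1

/-- The unique assignment to the empty set of coordinates. -/
def emptyA : PAssign U (∅ : Finset (Fin n)) := fun i => absurd i.2 (Finset.notMem_empty i.1)

/-- Probability of the event `E` under `π`. -/
def pr (X : WPC n U) (E : (∀ i, U i) → Prop) : ℝ :=
  ∑ ω : ∀ i, U i, if E ω then X.π ω else 0

lemma pr_congr (X : WPC n U) {E F : (∀ i, U i) → Prop} (h : ∀ ω, E ω ↔ F ω) :
    pr X E = pr X F :=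
  Finset.sum_congr rfl fun ω _ => if_congr (h ω) rfl rfl

/-- The `S`-marginal of `π`, evaluated at the partial assignment `α`. -/
def marg (X : WPC n U) (S : Finset (Fin n)) (α : PAssign U S) : ℝ :=
  pr X fun ω => restr S ω = α

/-- The pinned marginal `π_T^{(α)}`: the probability that the coordinates in `T` agree
with `β`, conditioned on the coordinates in `S` agreeing with `α`. -/
def cmarg (X : WPC n U) {S T : Finset (Fin n)} (α : PAssign U S) (β : PAssign U T) : ℝ :=
  pr X (fun ω => restr S ω = α ∧ restr T ω = β) / marg X S α

/-- The colored random walk `C_α^{I → J}`: entry `(τI, τJ)` is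
`Pr[ω_J = τJ | ω_I = τI, ω_S = α]`. -/
def Cwalk (X : WPC n U) (S I J : Finset (Fin n)) (α : PAssign U S)
    (τI : PAssign U I) (τJ : PAssign U J) : ℝ :=
  pr X (fun ω => restr S ω = α ∧ restr I ω = τI ∧ restr J ω = τJ) /
    pr X (fun ω => restr S ω = α ∧ restr I ω = τI)

/-- The second largest singular value of a row-stochastic matrix `M` satisfying
`μA M = μB`, with respect to the inner products weighted by `μA` and `μB`, via its
variational characterization
`σ₂(M) = sup { ⟨f, M g⟩_{μA} : ⟨f,1⟩_{μA} = ⟨g,1⟩_{μB} = 0, ‖f‖_{μA} = ‖g‖_{μB} = 1 }`. -/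
def sigma2 {A B : Type*} [Fintype A] [Fintype B]
    (μA : A → ℝ) (μB : B → ℝ) (M : A → B → ℝ) : ℝ :=
  sSup { r : ℝ | ∃ f : A → ℝ, ∃ g : B → ℝ,
    (∑ a, μA a * f a) = 0 ∧ (∑ b, μB b * g b) = 0 ∧
    (∑ a, μA a * f a ^ 2) = 1 ∧ (∑ b, μB b * g b ^ 2) = 1 ∧
    r = ∑ a, μA a * f a * ∑ b, M a b * g b }

/-- The second largest singular value `σ₂(C_α^{I → J})`, with respect to the inner
products weighted by the pinned marginals `π_I^{(α)}` and `π_J^{(α)}`. -/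
def sigma2C (X : WPC n U) (S I J : Finset (Fin n)) (α : PAssign U S) : ℝ :=
  sigma2 (fun τI : PAssign U I => cmarg X α τI) (fun τJ : PAssign U J => cmarg X α τJ)
    (Cwalk X S I J α)

/-- `ε^{I → J}`: the maximum of `σ₂(C_α^{I → J})` over all partial assignments `α`
to the coordinates outside `I ∪ J` (realizable on `Ω`). -/
def epsIJ (X : WPC n U) (I J : Finset (Fin n)) : ℝ :=
  sSup { r : ℝ | ∃ α : PAssign U (I ∪ J)ᶜ,
    0 < marg X (I ∪ J)ᶜ α ∧ r = sigma2C X (I ∪ J)ᶜ I J α }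

/-- `π` is `(ε 0, …, ε (n-2))`-product: for every realizable pinning `α` of a set `S` of at
most `n - 2` coordinates, and all distinct `i, j ∉ S`, `σ₂(C_α^{i → j}) ≤ ε |S|`. -/
def isProduct (X : WPC n U) (ε : ℕ → ℝ) : Prop :=
  ∀ S : Finset (Fin n), S.card ≤ n - 2 → ∀ α : PAssign U S, 0 < marg X S α →
    ∀ i j : Fin n, i ∉ S → j ∉ S → i ≠ j → sigma2C X S {i} {j} α ≤ ε S.card

/-- The update operator `Q_i`: resample the `i`-th coordinate according to `π`,
conditionally on all the other coordinates. -/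
def Qmat (X : WPC n U) (i : Fin n) : Matrix (∀ i, U i) (∀ i, U i) ℝ :=
  Matrix.of fun ω ω' =>
    pr X (fun τ => τ = ω' ∧ restr {i}ᶜ τ = restr {i}ᶜ ω) /
      pr X (fun τ => restr {i}ᶜ τ = restr {i}ᶜ ω)

/-- The sequential sweep `P_seq^{(s)} = Q_{s 0} Q_{s 1} ⋯ Q_{s (n-1)}`. -/
def Psq (X : WPC n U) (s : Equiv.Perm (Fin n)) : Matrix (∀ i, U i) (∀ i, U i) ℝ :=
  (List.ofFn fun j : Fin n => Qmat X (s j)).prod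

/-- The second largest singular value of the sequential sweep, with respect to the
inner product weighted by its stationary distribution `π`. -/
def sigma2P (X : WPC n U) (s : Equiv.Perm (Fin n)) : ℝ :=
  sigma2 X.π X.π fun ω ω' => Psq X s ω ω'

/-- The link graph `G_α` of a pinning `α` of the coordinates in `S`: vertices are pairs
`(i, x)` with `i ∉ S`, and `(i,x)`, `(j,y)` are adjacent when `i ≠ j` and the event
`{ω_i = x, ω_j = y, ω_S = α}` has positive probability. -/
def linkGraph (X : WPC n U) (S : Finset (Fin n)) (α : PAssign U S) :
    SimpleGraph ((i : Fin n) × U i) where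
  Adj v w := v.1 ≠ w.1 ∧ v.1 ∉ S ∧ w.1 ∉ S ∧
    0 < pr X fun ω => restr S ω = α ∧ ω v.1 = v.2 ∧ ω w.1 = w.2
  symm := by
    constructor
    rintro v w ⟨h1, h2, h3, h4⟩
    refine ⟨h1.symm, h3, h2, ?_⟩
    have e : pr X (fun ω => restr S ω = α ∧ ω w.1 = w.2 ∧ ω v.1 = v.2)
        = pr X (fun ω => restr S ω = α ∧ ω v.1 = v.2 ∧ ω w.1 = w.2) :=
      pr_congr X fun ω => by tauto
    rw [e]; exact h4
  loopless := by constructor; rintro v ⟨h1, -⟩; exact h1 rfl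

/-- `(X, π)` is link-connected: in every link graph (of a realizable pinning of at most
`n - 2` coordinates), every two valid vertices are connected by a path. -/
def linkConnected (X : WPC n U) : Prop :=
  ∀ S : Finset (Fin n), S.card ≤ n - 2 → ∀ α : PAssign U S, 0 < marg X S α →
    ∀ v w : (i : Fin n) × U i, v.1 ∉ S → w.1 ∉ S →
      0 < pr X (fun ω => restr S ω = α ∧ ω v.1 = v.2) →
      0 < pr X (fun ω => restr S ω = α ∧ ω w.1 = w.2) →
      (linkGraph X S α).Reachable v w

/-- The stationary measure of the random walk on the link graph `G_α`. -/
def linkMeas (X : WPC n U) (S : Finset (Fin n)) (α : PAssign U S) :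
    (i : Fin n) × U i → ℝ :=
  fun v => if v.1 ∈ S then 0 else
    (1 / ((n : ℝ) - (S.card : ℝ))) *
      (pr X (fun ω => restr S ω = α ∧ ω v.1 = v.2) / marg X S α)

/-- The random walk matrix `M_α` of the link graph `G_α`. -/
def linkWalk (X : WPC n U) (S : Finset (Fin n)) (α : PAssign U S) :
    (i : Fin n) × U i → (i : Fin n) × U i → ℝ :=
  fun v w =>
    if v.1 = w.1 ∨ v.1 ∈ S ∨ w.1 ∈ S then 0 else
      (1 / ((n : ℝ) - (S.card : ℝ) - 1)) *
        (pr X (fun ω => restr S ω = α ∧ ω v.1 = v.2 ∧ ω w.1 = w.2) /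
          pr X (fun ω => restr S ω = α ∧ ω v.1 = v.2))

/-- The second largest eigenvalue of a random walk matrix `M`, self-adjoint with respect
to the probability measure `μ`, via its variational characterization. -/
def lambda2 {A : Type*} [Fintype A] (μ : A → ℝ) (M : A → A → ℝ) : ℝ :=
  sSup { r : ℝ | ∃ f : A → ℝ,
    (∑ a, μ a * f a) = 0 ∧ (∑ a, μ a * f a ^ 2) = 1 ∧
    r = ∑ a, μ a * f a * ∑ b, M a b * f b }

/-- `(X, π)` is a `(γ 0, …, γ (n-2))`-local spectral expander:
`λ₂(M_α) ≤ γ |S|` for every realizable pinning `α` of at most `n - 2` coordinates. -/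
def isLocalExpander (X : WPC n U) (γ : ℕ → ℝ) : Prop :=
  ∀ S : Finset (Fin n), S.card ≤ n - 2 → ∀ α : PAssign U S, 0 < marg X S α →
    lambda2 (linkMeas X S α) (linkWalk X S α) ≤ γ S.card

/-- Kullback–Leibler divergence `D(μ ‖ ν) = Σ_a μ(a) log (μ(a) / ν(a))`. -/
def KL {A : Type*} [Fintype A] (μ ν : A → ℝ) : ℝ :=
  ∑ a, μ a * Real.log (μ a / ν a)

/-- `μ` is a probability distribution supported on `{a | P a}`. -/
def distOn {A : Type*} [Fintype A] (P : A → Prop) (μ : A → ℝ) : Prop :=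
  (∀ a, 0 ≤ μ a) ∧ (∑ a, μ a) = 1 ∧ ∀ a, ¬ P a → μ a = 0

/-- The `(I, J)` entropy contraction parameter `η^{I → J} = 1 - κ^{I → J}`, where
`κ^{I → J}` is the supremum of `D(μ C_α^{I→J} ‖ π_J^{(α)}) / D(μ ‖ π_I^{(α)})` over all
realizable pinnings `α` of the coordinates outside `I ∪ J` and all distributions `μ` on
the assignments of `I` compatible with `α`. -/
def etaIJ (X : WPC n U) (I J : Finset (Fin n)) : ℝ :=
  1 - sSup { r : ℝ | ∃ α : PAssign U (I ∪ J)ᶜ, 0 < marg X (I ∪ J)ᶜ α ∧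
    ∃ μ : PAssign U I → ℝ,
      distOn (fun τ => 0 < pr X fun ω => restr (I ∪ J)ᶜ ω = α ∧ restr I ω = τ) μ ∧
      KL μ (fun τ : PAssign U I => cmarg X α τ) ≠ 0 ∧
      r = KL (fun τJ : PAssign U J => ∑ τI : PAssign U I, μ τI * Cwalk X (I ∪ J)ᶜ I J α τI τJ)
            (fun τJ : PAssign U J => cmarg X α τJ) /
          KL μ (fun τ : PAssign U I => cmarg X α τ) }

/-- The entropy contraction factor `EC(M) = 1 - sup_μ D(μ M ‖ π) / D(μ ‖ π)` of a random
walk matrix `M` with stationary distribution `π`. -/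
def EC (X : WPC n U) (M : Matrix (∀ i, U i) (∀ i, U i) ℝ) : ℝ :=
  1 - sSup { r : ℝ | ∃ μ : (∀ i, U i) → ℝ, distOn (fun ω => ω ∈ X.Ω) μ ∧
    KL μ X.π ≠ 0 ∧ r = KL (Matrix.vecMul μ M) X.π / KL μ X.π }

/-- The `π`-weighted inner product on `ℝ^Ω`. -/
def ip (X : WPC n U) (f g : {ω // ω ∈ X.Ω} → ℝ) : ℝ :=
  ∑ ω : {ω // ω ∈ X.Ω}, X.π ω.1 * f ω * g ω

/-- The indicator vector `u_α ∈ ℝ^Ω` of the partial assignment `α` to the coordinates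
outside `T`. -/
def uvec (X : WPC n U) (T : Finset (Fin n)) (α : PAssign U Tᶜ) : {ω // ω ∈ X.Ω} → ℝ :=
  fun ω => if restr Tᶜ ω.1 = α then 1 else 0

/-- The subspace `U_T = span { u_α : α an assignment to the coordinates outside T }`. -/
def Uspan (X : WPC n U) (T : Finset (Fin n)) : Submodule ℝ ({ω // ω ∈ X.Ω} → ℝ) :=
  Submodule.span ℝ { f | ∃ α : PAssign U Tᶜ, f = uvec X T α }

/-- The subspace of functions on `Ω` depending only on the coordinates outside `T`. -/
def Uinv (X : WPC n U) (T : Finset (Fin n)) : Submodule ℝ ({ω // ω ∈ X.Ω} → ℝ) where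
  carrier := { f | ∀ ω ω' : {ω // ω ∈ X.Ω}, restr Tᶜ ω.1 = restr Tᶜ ω'.1 → f ω = f ω' }
  add_mem' := by
    intro f g hf hg ω ω' h
    simp only [Pi.add_apply, hf ω ω' h, hg ω ω' h]
  zero_mem' := by intro ω ω' h; rfl
  smul_mem' := by
    intro c f hf ω ω' h
    simp only [Pi.smul_apply, hf ω ω' h]

/-- The orthogonal complement (with respect to `⟨·,·⟩_π`) of a subspace, as a set. -/
def orthC (X : WPC n U) (W : Submodule ℝ ({ω // ω ∈ X.Ω} → ℝ)) :
    Set ({ω // ω ∈ X.Ω} → ℝ) :=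
  { f | ∀ g ∈ W, ip X f g = 0 }

/-- The cosine of the angle between two subspaces of `ℝ^Ω`:
`cos(A,B) = sup { ⟨u,v⟩_π : u ∈ A ∩ (A ⊓ B)ᗮ, v ∈ B ∩ (A ⊓ B)ᗮ, ‖u‖_π = ‖v‖_π = 1 }`. -/
def cosAngle (X : WPC n U) (A B : Submodule ℝ ({ω // ω ∈ X.Ω} → ℝ)) : ℝ :=
  sSup { r : ℝ | ∃ u, u ∈ A ∧ u ∈ orthC X (A ⊓ B) ∧
    ∃ v, v ∈ B ∧ v ∈ orthC X (A ⊓ B) ∧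
    ip X u u = 1 ∧ ip X v v = 1 ∧ r = ip X u v }

/-- The update operator `Q_i` as an operator on `ℝ^Ω`. -/
def Qop (X : WPC n U) (i : Fin n) (f : {ω // ω ∈ X.Ω} → ℝ) : {ω // ω ∈ X.Ω} → ℝ :=
  fun ω => ∑ ω' : {ω // ω ∈ X.Ω}, Qmat X i ω.1 ω'.1 * f ω'

/-- Concatenation of partial assignments on disjoint coordinate sets. -/
def joinAssign {S T : Finset (Fin n)} (β : PAssign U S) (α : PAssign U T) :
    PAssign U (S ∪ T) :=
  fun i => if h : i.1 ∈ S then β ⟨i.1, h⟩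
    else α ⟨i.1, (Finset.mem_union.mp i.2).resolve_left h⟩

/-- The `S`-marginal of a (not necessarily normalized) distribution `ν` on tuples. -/
def distMarg (ν : (∀ i, U i) → ℝ) (S : Finset (Fin n)) (a : PAssign U S) : ℝ :=
  ∑ ω : ∀ i, U i, if restr S ω = a then ν ω else 0

/-- The distribution `ν` conditioned on the `i`-th coordinate being `x`. -/
def condAt (ν : (∀ i, U i) → ℝ) (i : Fin n) (x : U i) : (∀ i, U i) → ℝ :=
  fun ω => if ω i = x then ν ω / (∑ ω' : ∀ i, U i, if ω' i = x then ν ω' else 0) else 0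

/-- The influence matrix `Inf_α` of the pinning `α` of the coordinates in `S`:
`Inf_α((i,x),(j,y)) = Pr[ω_j = y | ω_i = x, ω_S = α] - Pr[ω_j = y | ω_S = α]`
for `i ≠ j` outside `S`, and `0` otherwise. -/
def InfMat (X : WPC n U) (S : Finset (Fin n)) (α : PAssign U S) :
    Matrix ((i : Fin n) × U i) ((i : Fin n) × U i) ℝ :=
  Matrix.of fun v w =>
    if v.1 = w.1 ∨ v.1 ∈ S ∨ w.1 ∈ S then 0 else
      pr X (fun ω => restr S ω = α ∧ ω v.1 = v.2 ∧ ω w.1 = w.2) /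
          pr X (fun ω => restr S ω = α ∧ ω v.1 = v.2) -
        pr X (fun ω => restr S ω = α ∧ ω w.1 = w.2) / marg X S α

/-- `π` is `(c 0, …, c (n-2))`-spectrally independent: every (real) eigenvalue of the
influence matrix of a realizable pinning of at most `n - 2` coordinates is at most
`c |S|`. -/
def spectrallyIndependent (X : WPC n U) (c : ℕ → ℝ) : Prop :=
  ∀ S : Finset (Fin n), S.card ≤ n - 2 → ∀ α : PAssign U S, 0 < marg X S α →
    ∀ r : ℝ,
      (∃ v : ((i : Fin n) × U i) → ℝ, v ≠ 0 ∧ (InfMat X S α).mulVec v = r • v) →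
      r ≤ c S.card

end PaperFormal

namespace PaperFormal

variable {n : ℕ} {U : Fin n → Type*} [∀ i, Fintype (U i)] [∀ i, DecidableEq (U i)]


set_option linter.unusedSectionVars false
set_option maxHeartbeats 1000000

section AuxCS

/-- Weighted Cauchy–Schwarz. -/
lemma weighted_cs {A : Type*} [Fintype A] (w f g : A → ℝ) (hw : ∀ a, 0 ≤ w a) :
    (∑ a, w a * f a * g a)
      ≤ Real.sqrt (∑ a, w a * f a ^ 2) * Real.sqrt (∑ a, w a * g a ^ 2) := by
  have key : (∑ a, w a * f a * g a) ^ 2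
      ≤ (∑ a, w a * f a ^ 2) * (∑ a, w a * g a ^ 2) := by
    have h := Finset.sum_mul_sq_le_sq_mul_sq Finset.univ
      (fun a => Real.sqrt (w a) * f a) (fun a => Real.sqrt (w a) * g a)
    have e1 : ∀ a : A, (Real.sqrt (w a) * f a) * (Real.sqrt (w a) * g a)
        = w a * f a * g a := by
      intro a
      rw [mul_mul_mul_comm, Real.mul_self_sqrt (hw a), mul_assoc]
    have e2 : ∀ a : A, (Real.sqrt (w a) * f a) ^ 2 = w a * f a ^ 2 := by
      intro a; rw [mul_pow, Real.sq_sqrt (hw a)]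
    have e3 : ∀ a : A, (Real.sqrt (w a) * g a) ^ 2 = w a * g a ^ 2 := by
      intro a; rw [mul_pow, Real.sq_sqrt (hw a)]
    simpa only [e1, e2, e3] using h
  have h1 : (∑ a, w a * f a * g a) ≤ |∑ a, w a * f a * g a| := le_abs_self _
  have h2 : |∑ a, w a * f a * g a| = Real.sqrt ((∑ a, w a * f a * g a) ^ 2) :=
    (Real.sqrt_sq_eq_abs _).symm
  have h3 : Real.sqrt ((∑ a, w a * f a * g a) ^ 2)
      ≤ Real.sqrt ((∑ a, w a * f a ^ 2) * (∑ a, w a * g a ^ 2)) :=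
    Real.sqrt_le_sqrt key
  have h4 : Real.sqrt ((∑ a, w a * f a ^ 2) * (∑ a, w a * g a ^ 2))
      = Real.sqrt (∑ a, w a * f a ^ 2) * Real.sqrt (∑ a, w a * g a ^ 2) :=
    Real.sqrt_mul (Finset.sum_nonneg fun a _ => mul_nonneg (hw a) (sq_nonneg _)) _
  linarith

lemma sigma2_nonneg {A B : Type*} [Fintype A] [Fintype B]
    (μA : A → ℝ) (μB : B → ℝ) (M : A → B → ℝ) : 0 ≤ sigma2 μA μB M := by
  classical
  unfold sigma2
  set s : Set ℝ := { r : ℝ | ∃ f : A → ℝ, ∃ g : B → ℝ,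
    (∑ a, μA a * f a) = 0 ∧ (∑ b, μB b * g b) = 0 ∧
    (∑ a, μA a * f a ^ 2) = 1 ∧ (∑ b, μB b * g b ^ 2) = 1 ∧
    r = ∑ a, μA a * f a * ∑ b, M a b * g b } with hs
  by_cases hne : s.Nonempty
  · by_cases hb : BddAbove s
    · obtain ⟨r, f, g, h1, h2, h3, h4, h5⟩ := hne
      have hmem : r ∈ s := ⟨f, g, h1, h2, h3, h4, h5⟩
      have hmem' : -r ∈ s := by
        refine ⟨f, fun b => -g b, h1, ?_, h3, ?_, ?_⟩
        · simpa using h2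
        · simpa using h4
        · rw [h5, ← Finset.sum_neg_distrib]
          refine Finset.sum_congr rfl fun a _ => ?_
          rw [← mul_neg, ← Finset.sum_neg_distrib]
          congr 1
          exact Finset.sum_congr rfl fun b _ => by ring
      have := le_csSup hb hmem
      have := le_csSup hb hmem'
      linarith
  
    · rw [Real.sSup_of_not_bddAbove hb]
  · rw [Set.not_nonempty_iff_eq_empty] at hne
    rw [hne, Real.sSup_empty]

/-- Every element of the variational set of `sigma2` is at most 1, for a
nonnegative stochastic kernel. -/
lemma sigma2_set_le_one {A B : Type*} [Fintype A] [Fintype B]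
    (μA : A → ℝ) (μB : B → ℝ) (M : A → B → ℝ)
    (hμA : ∀ a, 0 ≤ μA a) (hM : ∀ a b, 0 ≤ M a b)
    (hrow : ∀ a, μA a ≠ 0 → (∑ b, M a b) = 1)
    (hcol : ∀ b, (∑ a, μA a * M a b) = μB b)
    {r : ℝ}
    (hr : r ∈ { r : ℝ | ∃ f : A → ℝ, ∃ g : B → ℝ,
      (∑ a, μA a * f a) = 0 ∧ (∑ b, μB b * g b) = 0 ∧
      (∑ a, μA a * f a ^ 2) = 1 ∧ (∑ b, μB b * g b ^ 2) = 1 ∧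
      r = ∑ a, μA a * f a * ∑ b, M a b * g b }) : r ≤ 1 := by
  classical
  obtain ⟨f, g, _, _, h3, h4, h5⟩ := hr
  set w : A × B → ℝ := fun p => μA p.1 * M p.1 p.2 with hw
  have hwnn : ∀ p : A × B, 0 ≤ w p := fun p => mul_nonneg (hμA p.1) (hM p.1 p.2)
  have hsum : r = ∑ p : A × B, w p * f p.1 * g p.2 := by
    rw [h5, Fintype.sum_prod_type]
    refine Finset.sum_congr rfl fun a _ => ?_
    rw [Finset.mul_sum]
    refine Finset.sum_congr rfl fun b _ => by simp only [hw]; ring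
  have hwf : (∑ p : A × B, w p * f p.1 ^ 2) = 1 := by
    rw [Fintype.sum_prod_type]
    rw [← h3]
    refine Finset.sum_congr rfl fun a _ => ?_
    by_cases ha : μA a = 0
    · simp [hw, ha]
    · calc (∑ b, w (a, b) * f a ^ 2) = (∑ b, w (a, b)) * f a ^ 2 := by
            rw [Finset.sum_mul]
        _ = μA a * f a ^ 2 := by
            simp only [hw]; rw [← Finset.mul_sum, hrow a ha, mul_one]
  have hwg : (∑ p : A × B, w p * g p.2 ^ 2) = 1 := by
    rw [Fintype.sum_prod_type_right]
    rw [← h4]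
    refine Finset.sum_congr rfl fun b _ => ?_
    calc (∑ a, w (a, b) * g b ^ 2) = (∑ a, w (a, b)) * g b ^ 2 := by
          rw [Finset.sum_mul]
      _ = μB b * g b ^ 2 := by simp only [hw]; rw [hcol b]
  have := weighted_cs w (fun p => f p.1) (fun p => g p.2) hwnn
  rw [hwf, hwg] at this
  simpa [hsum, Real.sqrt_one] using this

end AuxCS

section AuxGlue

variable (I J : Finset (Fin n))

/-- Assemble a full tuple from assignments on `I`, `J`, and `(I ∪ J)ᶜ`. -/
def glue (τI : PAssign U I) (τJ : PAssign U J) (α : PAssign U (I ∪ J)ᶜ) : ∀ i, U i :=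
  fun i =>
    if h : i ∈ I then τI ⟨i, h⟩
    else if h' : i ∈ J then τJ ⟨i, h'⟩
    else α ⟨i, by simp [Finset.mem_compl, Finset.mem_union, h, h']⟩

lemma restr_glue_I (τI : PAssign U I) (τJ : PAssign U J) (α : PAssign U (I ∪ J)ᶜ) :
    restr I (glue I J τI τJ α) = τI := by
  funext i; simp [restr, glue, i.2]

lemma restr_glue_J (hIJ : Disjoint I J) (τI : PAssign U I) (τJ : PAssign U J)
    (α : PAssign U (I ∪ J)ᶜ) : restr J (glue I J τI τJ α) = τJ := by
  funext i
  have hnI : i.1 ∉ I := fun h => (Finset.disjoint_left.mp hIJ h) i.2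
  simp [restr, glue, hnI, i.2]

lemma restr_glue_K (τI : PAssign U I) (τJ : PAssign U J) (α : PAssign U (I ∪ J)ᶜ) :
    restr (I ∪ J)ᶜ (glue I J τI τJ α) = α := by
  funext i
  have h := i.2
  rw [Finset.mem_compl, Finset.mem_union] at h
  push_neg at h
  simp [restr, glue, h.1, h.2]

lemma glue_restr (ω : ∀ i, U i) :
    glue I J (restr I ω) (restr J ω) (restr (I ∪ J)ᶜ ω) = ω := by
  funext i
  simp only [glue, restr]
  split_ifs <;> rfl

/-- The glueing bijection. -/
def glueEquiv (hIJ : Disjoint I J) :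
    (PAssign U I × PAssign U J × PAssign U (I ∪ J)ᶜ) ≃ (∀ i, U i) where
  toFun p := glue I J p.1 p.2.1 p.2.2
  invFun ω := (restr I ω, restr J ω, restr (I ∪ J)ᶜ ω)
  left_inv p := by
    obtain ⟨τI, τJ, α⟩ := p
    simp [restr_glue_I, restr_glue_J I J hIJ, restr_glue_K]
  right_inv ω := glue_restr I J ω

lemma sum_glue (hIJ : Disjoint I J) (f : (∀ i, U i) → ℝ) :
    (∑ ω : ∀ i, U i, f ω)
      = ∑ τI : PAssign U I, ∑ τJ : PAssign U J, ∑ α : PAssign U (I ∪ J)ᶜ,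
          f (glue I J τI τJ α) := by
  rw [← Equiv.sum_comp (glueEquiv I J hIJ) f]
  simp [glueEquiv, Fintype.sum_prod_type]

end AuxGlue


section AuxPr

variable (X : WPC n U) (I J : Finset (Fin n))

lemma pr_nonneg (E : (∀ i, U i) → Prop) : 0 ≤ pr X E := by
  unfold pr
  exact Finset.sum_nonneg fun ω _ => by
    split_ifs
    exacts [X.nonneg ω, le_rfl]

lemma pi_zero {ω : ∀ i, U i} (h : ω ∉ X.Ω) : X.π ω = 0 := by
  by_contra hne
  exact h ((X.support ω).mp (lt_of_le_of_ne (X.nonneg ω) (Ne.symm hne)))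

lemma sum_pi_mul (F : (∀ i, U i) → ℝ) :
    (∑ ω : {ω // ω ∈ X.Ω}, X.π ω.1 * F ω.1) = ∑ ω : ∀ i, U i, X.π ω * F ω := by
  rw [Finset.sum_coe_sort X.Ω (fun ω => X.π ω * F ω)]
  exact Finset.sum_subset (Finset.subset_univ _)
    (fun ω _ h => by rw [pi_zero X h, zero_mul])

/-- weights -/
def gI (α : PAssign U (I ∪ J)ᶜ) (τI : PAssign U I) : ℝ :=
  ∑ τJ : PAssign U J, X.π (glue I J τI τJ α)

def gJ (α : PAssign U (I ∪ J)ᶜ) (τJ : PAssign U J) : ℝ :=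
  ∑ τI : PAssign U I, X.π (glue I J τI τJ α)

def gm (α : PAssign U (I ∪ J)ᶜ) : ℝ :=
  ∑ τI : PAssign U I, ∑ τJ : PAssign U J, X.π (glue I J τI τJ α)

lemma gI_nonneg (α : PAssign U (I ∪ J)ᶜ) (τI : PAssign U I) : 0 ≤ gI X I J α τI :=
  Finset.sum_nonneg fun τJ _ => X.nonneg _

lemma gJ_nonneg (α : PAssign U (I ∪ J)ᶜ) (τJ : PAssign U J) : 0 ≤ gJ X I J α τJ :=
  Finset.sum_nonneg fun τI _ => X.nonneg _

lemma gm_nonneg (α : PAssign U (I ∪ J)ᶜ) : 0 ≤ gm X I J α :=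
  Finset.sum_nonneg fun τI _ => gI_nonneg X I J α τI

lemma pi_le_gI (α : PAssign U (I ∪ J)ᶜ) (τI : PAssign U I) (τJ : PAssign U J) :
    X.π (glue I J τI τJ α) ≤ gI X I J α τI :=
  Finset.single_le_sum (f := fun τJ' => X.π (glue I J τI τJ' α))
    (fun τJ' _ => X.nonneg _) (Finset.mem_univ τJ)

lemma pi_le_gJ (α : PAssign U (I ∪ J)ᶜ) (τI : PAssign U I) (τJ : PAssign U J) :
    X.π (glue I J τI τJ α) ≤ gJ X I J α τJ :=
  Finset.single_le_sum (f := fun τI' => X.π (glue I J τI' τJ α))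
    (fun τI' _ => X.nonneg _) (Finset.mem_univ τI)

lemma gI_le_gm (α : PAssign U (I ∪ J)ᶜ) (τI : PAssign U I) :
    gI X I J α τI ≤ gm X I J α :=
  Finset.single_le_sum (f := fun τI' => gI X I J α τI')
    (fun τI' _ => gI_nonneg X I J α τI') (Finset.mem_univ τI)

lemma gm_eq_sum_gJ (α : PAssign U (I ∪ J)ᶜ) :
    gm X I J α = ∑ τJ : PAssign U J, gJ X I J α τJ :=
  Finset.sum_comm

lemma pr_glue (hIJ : Disjoint I J) (α : PAssign U (I ∪ J)ᶜ)
    (τI : PAssign U I) (τJ : PAssign U J) :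
    pr X (fun ω => restr (I ∪ J)ᶜ ω = α ∧ restr I ω = τI ∧ restr J ω = τJ)
      = X.π (glue I J τI τJ α) := by
  unfold pr
  rw [Finset.sum_eq_single_of_mem (glue I J τI τJ α) (Finset.mem_univ _)]
  · rw [if_pos ⟨restr_glue_K I J τI τJ α, restr_glue_I I J τI τJ α,
      restr_glue_J I J hIJ τI τJ α⟩]
  · intro ω _ hne
    rw [if_neg]
    rintro ⟨h1, h2, h3⟩
    exact hne (by rw [← glue_restr I J ω, h1, h2, h3])

lemma pr_KI (hIJ : Disjoint I J) (α : PAssign U (I ∪ J)ᶜ) (τI : PAssign U I) :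
    pr X (fun ω => restr (I ∪ J)ᶜ ω = α ∧ restr I ω = τI) = gI X I J α τI := by
  unfold pr gI
  rw [sum_glue I J hIJ]
  simp only [restr_glue_K, restr_glue_I, ite_and, Finset.sum_ite_eq',
    Finset.mem_univ, if_true]
  rw [Finset.sum_comm]
  simp only [Finset.sum_ite_eq', Finset.mem_univ, if_true]

lemma pr_KJ (hIJ : Disjoint I J) (α : PAssign U (I ∪ J)ᶜ) (τJ : PAssign U J) :
    pr X (fun ω => restr (I ∪ J)ᶜ ω = α ∧ restr J ω = τJ) = gJ X I J α τJ := by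
  unfold pr gJ
  rw [sum_glue I J hIJ]
  simp only [restr_glue_K, restr_glue_J I J hIJ, ite_and, Finset.sum_ite_eq',
    Finset.mem_univ, if_true]

lemma marg_K (hIJ : Disjoint I J) (α : PAssign U (I ∪ J)ᶜ) :
    marg X (I ∪ J)ᶜ α = gm X I J α := by
  unfold marg pr gm
  rw [sum_glue I J hIJ]
  simp only [restr_glue_K, Finset.sum_ite_eq', Finset.mem_univ, if_true]

lemma cmarg_I (hIJ : Disjoint I J) (α : PAssign U (I ∪ J)ᶜ) (τI : PAssign U I) :
    cmarg X α τI = gI X I J α τI / gm X I J α := by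
  unfold cmarg
  rw [pr_KI X I J hIJ, marg_K X I J hIJ]

lemma cmarg_J (hIJ : Disjoint I J) (α : PAssign U (I ∪ J)ᶜ) (τJ : PAssign U J) :
    cmarg X α τJ = gJ X I J α τJ / gm X I J α := by
  unfold cmarg
  rw [pr_KJ X I J hIJ, marg_K X I J hIJ]

lemma Cwalk_eq (hIJ : Disjoint I J) (α : PAssign U (I ∪ J)ᶜ)
    (τI : PAssign U I) (τJ : PAssign U J) :
    Cwalk X (I ∪ J)ᶜ I J α τI τJ = X.π (glue I J τI τJ α) / gI X I J α τI := by
  unfold Cwalk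
  rw [pr_glue X I J hIJ, pr_KI X I J hIJ]

end AuxPr


section AuxBlock

lemma sigma2C_nonneg (X : WPC n U) (S I J : Finset (Fin n)) (α : PAssign U S) :
    0 ≤ sigma2C X S I J α := by
  unfold sigma2C
  exact sigma2_nonneg _ _ _

lemma block_bound (X : WPC n U) (I J : Finset (Fin n)) (hIJ : Disjoint I J)
    (α : PAssign U (I ∪ J)ᶜ) (F : PAssign U I → ℝ) (G : PAssign U J → ℝ)
    (hm : 0 < gm X I J α)
    (hF0 : (∑ τI, gI X I J α τI * F τI) = 0)
    (hG0 : (∑ τJ, gJ X I J α τJ * G τJ) = 0) :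
    (∑ τI, ∑ τJ, X.π (glue I J τI τJ α) * F τI * G τJ)
      ≤ sigma2C X (I ∪ J)ᶜ I J α
        * Real.sqrt (∑ τI, gI X I J α τI * F τI ^ 2)
        * Real.sqrt (∑ τJ, gJ X I J α τJ * G τJ ^ 2) := by
  classical
  set σ := sigma2C X (I ∪ J)ᶜ I J α with hσdef
  have hσ0 : 0 ≤ σ := sigma2C_nonneg X _ I J α
  set a2 := ∑ τI, gI X I J α τI * F τI ^ 2 with ha2
  set b2 := ∑ τJ, gJ X I J α τJ * G τJ ^ 2 with hb2
  have ha2nn : 0 ≤ a2 := Finset.sum_nonneg fun τI _ =>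
    mul_nonneg (gI_nonneg X I J α τI) (sq_nonneg _)
  have hb2nn : 0 ≤ b2 := Finset.sum_nonneg fun τJ _ =>
    mul_nonneg (gJ_nonneg X I J α τJ) (sq_nonneg _)
  have hgmne : gm X I J α ≠ 0 := ne_of_gt hm
  by_cases hA : a2 = 0
  · have hz : ∀ τI τJ, X.π (glue I J τI τJ α) * F τI * G τJ = 0 := by
      intro τI τJ
      have h0 : gI X I J α τI * F τI ^ 2 = 0 :=
        (Finset.sum_eq_zero_iff_of_nonneg (fun τI' _ =>
          mul_nonneg (gI_nonneg X I J α τI') (sq_nonneg _))).mp hA τI (Finset.mem_univ τI)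
      rcases mul_eq_zero.mp h0 with h | h
      · have hπ : X.π (glue I J τI τJ α) = 0 :=
          le_antisymm (h ▸ pi_le_gI X I J α τI τJ) (X.nonneg _)
        rw [hπ, zero_mul, zero_mul]
      · have hF : F τI = 0 := by nlinarith [sq_nonneg (F τI)]
        rw [hF, mul_zero, zero_mul]
    have hL : (∑ τI, ∑ τJ, X.π (glue I J τI τJ α) * F τI * G τJ) = 0 :=
      Finset.sum_eq_zero fun τI _ => Finset.sum_eq_zero fun τJ _ => hz τI τJ
    rw [hL, hA, Real.sqrt_zero, mul_zero, zero_mul]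
  by_cases hB : b2 = 0
  · have hz : ∀ τI τJ, X.π (glue I J τI τJ α) * F τI * G τJ = 0 := by
      intro τI τJ
      have h0 : gJ X I J α τJ * G τJ ^ 2 = 0 :=
        (Finset.sum_eq_zero_iff_of_nonneg (fun τJ' _ =>
          mul_nonneg (gJ_nonneg X I J α τJ') (sq_nonneg _))).mp hB τJ (Finset.mem_univ τJ)
      rcases mul_eq_zero.mp h0 with h | h
      · have hπ : X.π (glue I J τI τJ α) = 0 :=
          le_antisymm (h ▸ pi_le_gJ X I J α τI τJ) (X.nonneg _)
        rw [hπ, zero_mul, zero_mul]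
      · have hG : G τJ = 0 := by nlinarith [sq_nonneg (G τJ)]
        rw [hG, mul_zero]
    have hL : (∑ τI, ∑ τJ, X.π (glue I J τI τJ α) * F τI * G τJ) = 0 :=
      Finset.sum_eq_zero fun τI _ => Finset.sum_eq_zero fun τJ _ => hz τI τJ
    rw [hL, hB, Real.sqrt_zero, mul_zero]
  have ha2p : 0 < a2 := lt_of_le_of_ne ha2nn (Ne.symm hA)
  have hb2p : 0 < b2 := lt_of_le_of_ne hb2nn (Ne.symm hB)
  set a := Real.sqrt a2 with ha
  set b := Real.sqrt b2 with hb
  have hap : 0 < a := Real.sqrt_pos.mpr ha2p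
  have hbp : 0 < b := Real.sqrt_pos.mpr hb2p
  have haa : a ^ 2 = a2 := Real.sq_sqrt ha2nn
  have hbb : b ^ 2 = b2 := Real.sq_sqrt hb2nn
  set c := Real.sqrt (gm X I J α) with hc
  have hcc : c ^ 2 = gm X I J α := Real.sq_sqrt (gm_nonneg X I J α)
  set f : PAssign U I → ℝ := fun τI => F τI * c / a with hf
  set g : PAssign U J → ℝ := fun τJ => G τJ * c / b with hg
  set S := ∑ τI, ∑ τJ, X.π (glue I J τI τJ α) * F τI * G τJ with hS
  -- the four side conditions
  have h1 : (∑ τI, cmarg X α τI * f τI) = 0 := by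
    have he : ∀ τI, cmarg X α τI * f τI
        = gI X I J α τI * F τI * (c / (gm X I J α * a)) := by
      intro τI
      rw [cmarg_I X I J hIJ, hf]
      ring
    simp only [he]
    rw [← Finset.sum_mul, hF0, zero_mul]
  have h2 : (∑ τJ, cmarg X α τJ * g τJ) = 0 := by
    have he : ∀ τJ, cmarg X α τJ * g τJ
        = gJ X I J α τJ * G τJ * (c / (gm X I J α * b)) := by
      intro τJ
      rw [cmarg_J X I J hIJ, hg]
      ring
    simp only [he]
    rw [← Finset.sum_mul, hG0, zero_mul]
  have h3 : (∑ τI, cmarg X α τI * f τI ^ 2) = 1 := by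
    have he : ∀ τI, cmarg X α τI * f τI ^ 2
        = gI X I J α τI * F τI ^ 2 * (c ^ 2 / (gm X I J α * a ^ 2)) := by
      intro τI
      rw [cmarg_I X I J hIJ, hf]
      ring
    simp only [he]
    rw [← Finset.sum_mul, ← ha2, hcc, haa]
    field_simp
  have h4 : (∑ τJ, cmarg X α τJ * g τJ ^ 2) = 1 := by
    have he : ∀ τJ, cmarg X α τJ * g τJ ^ 2
        = gJ X I J α τJ * G τJ ^ 2 * (c ^ 2 / (gm X I J α * b ^ 2)) := by
      intro τJ
      rw [cmarg_J X I J hIJ, hg]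
      ring
    simp only [he]
    rw [← Finset.sum_mul, ← hb2, hcc, hbb]
    field_simp
  -- the value
  have hval : (∑ τI, cmarg X α τI * f τI * ∑ τJ, Cwalk X (I ∪ J)ᶜ I J α τI τJ * g τJ)
      = S / (a * b) := by
    have he : ∀ τI, cmarg X α τI * f τI *
          (∑ τJ, Cwalk X (I ∪ J)ᶜ I J α τI τJ * g τJ)
        = ∑ τJ, X.π (glue I J τI τJ α) * F τI * G τJ / (a * b) := by
      intro τI
      rw [Finset.mul_sum]
      refine Finset.sum_congr rfl fun τJ _ => ?_
      rw [cmarg_I X I J hIJ, Cwalk_eq X I J hIJ, hf, hg]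
      by_cases hgI : gI X I J α τI = 0
      · have hπ : X.π (glue I J τI τJ α) = 0 :=
          le_antisymm (hgI ▸ pi_le_gI X I J α τI τJ) (X.nonneg _)
        rw [hgI, hπ]
        simp
      · have he2 : gI X I J α τI / gm X I J α * (F τI * c / a) *
              (X.π (glue I J τI τJ α) / gI X I J α τI * (G τJ * c / b))
            = X.π (glue I J τI τJ α) * F τI * G τJ * (c ^ 2 / gm X I J α) / (a * b) := by
          field_simp
        rw [he2, hcc, div_self hgmne, mul_one]
    simp only [he]
    rw [hS, Finset.sum_div]
    exact Finset.sum_congr rfl fun τI _ => (Finset.sum_div _ _ _).symm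
  -- conclude via sigma2
  have hle : S / (a * b) ≤ σ := by
    rw [hσdef]
    unfold sigma2C sigma2
    refine le_csSup ⟨1, fun x hx => sigma2_set_le_one _ _ _ ?_ ?_ ?_ ?_ hx⟩
      ⟨f, g, h1, h2, h3, h4, hval.symm⟩
    · intro τI
      rw [cmarg_I X I J hIJ]
      exact div_nonneg (gI_nonneg X I J α τI) (gm_nonneg X I J α)
    · intro τI τJ
      unfold Cwalk
      exact div_nonneg (pr_nonneg X _) (pr_nonneg X _)
    · intro τI hne
      have hgI : gI X I J α τI ≠ 0 := by
        intro h
        exact hne (by rw [cmarg_I X I J hIJ, h, zero_div])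
      simp only [Cwalk_eq X I J hIJ]
      rw [← Finset.sum_div]
      exact div_self hgI
    · intro τJ
      rw [cmarg_J X I J hIJ]
      have he : ∀ τI, cmarg X α τI * Cwalk X (I ∪ J)ᶜ I J α τI τJ
          = X.π (glue I J τI τJ α) / gm X I J α := by
        intro τI
        rw [cmarg_I X I J hIJ, Cwalk_eq X I J hIJ]
        by_cases hgI : gI X I J α τI = 0
        · have hπ : X.π (glue I J τI τJ α) = 0 :=
            le_antisymm (hgI ▸ pi_le_gI X I J α τI τJ) (X.nonneg _)
          rw [hgI, hπ]
          simp
        · field_simp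
      simp only [he]
      rw [← Finset.sum_div]
      rfl
  have hab : 0 < a * b := mul_pos hap hbp
  calc S = S / (a * b) * (a * b) := by field_simp
    _ ≤ σ * (a * b) := mul_le_mul_of_nonneg_right hle hab.le
    _ = σ * a * b := (mul_assoc σ a b).symm

end AuxBlock


section AuxMain

lemma sum_glue' (I J : Finset (Fin n)) (hIJ : Disjoint I J) (f : (∀ i, U i) → ℝ) :
    (∑ ω : ∀ i, U i, f ω)
      = ∑ α : PAssign U (I ∪ J)ᶜ, ∑ τI : PAssign U I, ∑ τJ : PAssign U J,
          f (glue I J τI τJ α) := by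
  rw [sum_glue I J hIJ f]
  have h1 : ∀ τI : PAssign U I,
      (∑ τJ : PAssign U J, ∑ α : PAssign U (I ∪ J)ᶜ, f (glue I J τI τJ α))
        = ∑ α : PAssign U (I ∪ J)ᶜ, ∑ τJ : PAssign U J, f (glue I J τI τJ α) :=
    fun τI => Finset.sum_comm
  simp only [h1]
  exact Finset.sum_comm

lemma restr_sub_congr {S T : Finset (Fin n)} (hST : S ⊆ T) {ω ω' : ∀ i, U i}
    (h : restr T ω = restr T ω') : restr S ω = restr S ω' := by
  funext i
  exact congrFun h ⟨i.1, hST i.2⟩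

lemma K_subset_Ic (I J : Finset (Fin n)) : (I ∪ J)ᶜ ⊆ Iᶜ := by
  intro i hi
  simp only [Finset.mem_compl, Finset.mem_union] at *
  tauto

lemma K_subset_Jc (I J : Finset (Fin n)) : (I ∪ J)ᶜ ⊆ Jᶜ := by
  intro i hi
  simp only [Finset.mem_compl, Finset.mem_union] at *
  tauto

lemma restr_Ic_of (I J : Finset (Fin n)) {ω ω' : ∀ i, U i}
    (hK : restr (I ∪ J)ᶜ ω = restr (I ∪ J)ᶜ ω') (hJ : restr J ω = restr J ω') :
    restr Iᶜ ω = restr Iᶜ ω' := by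
  funext i
  have hi : i.1 ∉ I := Finset.mem_compl.mp i.2
  by_cases hiJ : i.1 ∈ J
  · exact congrFun hJ ⟨i.1, hiJ⟩
  · have hiK : i.1 ∈ (I ∪ J)ᶜ := by
      rw [Finset.mem_compl, Finset.mem_union]
      push_neg
      exact ⟨hi, hiJ⟩
    exact congrFun hK ⟨i.1, hiK⟩

lemma restr_Jc_of (I J : Finset (Fin n)) {ω ω' : ∀ i, U i}
    (hK : restr (I ∪ J)ᶜ ω = restr (I ∪ J)ᶜ ω') (hI : restr I ω = restr I ω') :
    restr Jᶜ ω = restr Jᶜ ω' := by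
  funext i
  have hi : i.1 ∉ J := Finset.mem_compl.mp i.2
  by_cases hiI : i.1 ∈ I
  · exact congrFun hI ⟨i.1, hiI⟩
  · have hiK : i.1 ∈ (I ∪ J)ᶜ := by
      rw [Finset.mem_compl, Finset.mem_union]
      push_neg
      exact ⟨hiI, hi⟩
    exact congrFun hK ⟨i.1, hiK⟩

end AuxMain

theorem cos_le_epsIJ
    (X : WPC n U) (hconn : linkConnected X) (I J : Finset (Fin n)) (hIJ : Disjoint I J) :
    cosAngle X (Uinv X I) (Uinv X J) ≤ epsIJ X I J := by
  classical
  have hε0 : 0 ≤ epsIJ X I J := by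
    apply Real.sSup_nonneg
    rintro r ⟨α, -, rfl⟩
    exact sigma2C_nonneg X _ I J α
  have hbdd : BddAbove {r : ℝ | ∃ α : PAssign U (I ∪ J)ᶜ,
      0 < marg X (I ∪ J)ᶜ α ∧ r = sigma2C X (I ∪ J)ᶜ I J α} := by
    refine (Set.Finite.subset (Set.finite_range
      (fun α : PAssign U (I ∪ J)ᶜ => sigma2C X (I ∪ J)ᶜ I J α)) ?_).bddAbove
    rintro r ⟨α, -, rfl⟩
    exact ⟨α, rfl⟩
  have hσε : ∀ α : PAssign U (I ∪ J)ᶜ, 0 < gm X I J α →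
      sigma2C X (I ∪ J)ᶜ I J α ≤ epsIJ X I J := by
    intro α hmα
    exact le_csSup hbdd ⟨α, by rw [marg_K X I J hIJ]; exact hmα, rfl⟩
  refine Real.sSup_le ?_ hε0
  rintro x ⟨u, hu, huO, v, hv, hvO, huu, hvv, rfl⟩
  have hu' : ∀ ω ω' : {ω // ω ∈ X.Ω}, restr Iᶜ ω.1 = restr Iᶜ ω'.1 → u ω = u ω' := hu
  have hv' : ∀ ω ω' : {ω // ω ∈ X.Ω}, restr Jᶜ ω.1 = restr Jᶜ ω'.1 → v ω = v ω' := hv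
  set uF : PAssign U (I ∪ J)ᶜ → PAssign U J → ℝ := fun α τJ =>
    if h : ∃ ω : {ω // ω ∈ X.Ω}, restr (I ∪ J)ᶜ ω.1 = α ∧ restr J ω.1 = τJ
    then u h.choose else 0 with huFdef
  set vF : PAssign U (I ∪ J)ᶜ → PAssign U I → ℝ := fun α τI =>
    if h : ∃ ω : {ω // ω ∈ X.Ω}, restr (I ∪ J)ᶜ ω.1 = α ∧ restr I ω.1 = τI
    then v h.choose else 0 with hvFdef
  have huF : ∀ ω : {ω // ω ∈ X.Ω}, u ω = uF (restr (I ∪ J)ᶜ ω.1) (restr J ω.1) := by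
    intro ω
    have hex : ∃ ω' : {ω // ω ∈ X.Ω},
        restr (I ∪ J)ᶜ ω'.1 = restr (I ∪ J)ᶜ ω.1 ∧ restr J ω'.1 = restr J ω.1 :=
      ⟨ω, rfl, rfl⟩
    rw [huFdef]
    simp only
    rw [dif_pos hex]
    exact hu' ω hex.choose
      (restr_Ic_of I J hex.choose_spec.1 hex.choose_spec.2).symm
  have hvF : ∀ ω : {ω // ω ∈ X.Ω}, v ω = vF (restr (I ∪ J)ᶜ ω.1) (restr I ω.1) := by
    intro ω
    have hex : ∃ ω' : {ω // ω ∈ X.Ω},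
        restr (I ∪ J)ᶜ ω'.1 = restr (I ∪ J)ᶜ ω.1 ∧ restr I ω'.1 = restr I ω.1 :=
      ⟨ω, rfl, rfl⟩
    rw [hvFdef]
    simp only
    rw [dif_pos hex]
    exact hv' ω hex.choose
      (restr_Jc_of I J hex.choose_spec.1 hex.choose_spec.2).symm
  -- expansion of ip u v
  have hipuv : ip X u v = ∑ α : PAssign U (I ∪ J)ᶜ, ∑ τI : PAssign U I,
      ∑ τJ : PAssign U J, X.π (glue I J τI τJ α) * vF α τI * uF α τJ := by
    unfold ip
    have hterm : ∀ ω : {ω // ω ∈ X.Ω}, X.π ω.1 * u ω * v ω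
        = X.π ω.1 * (vF (restr (I ∪ J)ᶜ ω.1) (restr I ω.1)
            * uF (restr (I ∪ J)ᶜ ω.1) (restr J ω.1)) := by
      intro ω
      rw [huF ω, hvF ω]
      ring
    rw [Finset.sum_congr rfl fun ω _ => hterm ω,
      sum_pi_mul X (fun ω => vF (restr (I ∪ J)ᶜ ω) (restr I ω)
        * uF (restr (I ∪ J)ᶜ ω) (restr J ω)), sum_glue' I J hIJ]
    refine Finset.sum_congr rfl fun α _ => Finset.sum_congr rfl fun τI _ =>
      Finset.sum_congr rfl fun τJ _ => ?_
    rw [restr_glue_K, restr_glue_I, restr_glue_J I J hIJ]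
    ring
  -- norms
  have hipvv : (∑ α : PAssign U (I ∪ J)ᶜ, ∑ τI : PAssign U I,
      gI X I J α τI * vF α τI ^ 2) = 1 := by
    rw [← hvv]
    unfold ip
    have hterm : ∀ ω : {ω // ω ∈ X.Ω}, X.π ω.1 * v ω * v ω
        = X.π ω.1 * (vF (restr (I ∪ J)ᶜ ω.1) (restr I ω.1) ^ 2) := by
      intro ω
      rw [hvF ω]
      ring
    rw [Finset.sum_congr rfl fun ω _ => hterm ω,
      sum_pi_mul X (fun ω => vF (restr (I ∪ J)ᶜ ω) (restr I ω) ^ 2),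
      sum_glue' I J hIJ]
    refine (Finset.sum_congr rfl fun α _ => Finset.sum_congr rfl fun τI _ => ?_).symm
    simp only [restr_glue_K, restr_glue_I]
    rw [← Finset.sum_mul]
    rfl
  have hipuu : (∑ α : PAssign U (I ∪ J)ᶜ, ∑ τJ : PAssign U J,
      gJ X I J α τJ * uF α τJ ^ 2) = 1 := by
    rw [← huu]
    unfold ip
    have hterm : ∀ ω : {ω // ω ∈ X.Ω}, X.π ω.1 * u ω * u ω
        = X.π ω.1 * (uF (restr (I ∪ J)ᶜ ω.1) (restr J ω.1) ^ 2) := by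
      intro ω
      rw [huF ω]
      ring
    rw [Finset.sum_congr rfl fun ω _ => hterm ω,
      sum_pi_mul X (fun ω => uF (restr (I ∪ J)ᶜ ω) (restr J ω) ^ 2),
      sum_glue' I J hIJ]
    refine (Finset.sum_congr rfl fun α _ => ?_).symm
    simp only [restr_glue_K, restr_glue_J I J hIJ]
    rw [Finset.sum_comm]
    refine Finset.sum_congr rfl fun τJ _ => ?_
    rw [← Finset.sum_mul]
    rfl
  -- orthogonality against indicators
  have hv0 : ∀ α₀ : PAssign U (I ∪ J)ᶜ,
      (∑ τI : PAssign U I, gI X I J α₀ τI * vF α₀ τI) = 0 := by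
    intro α₀
    set gind : {ω // ω ∈ X.Ω} → ℝ :=
      fun ω => if restr (I ∪ J)ᶜ ω.1 = α₀ then 1 else 0 with hginddef
    have hgmem : gind ∈ Uinv X I ⊓ Uinv X J := by
      refine Submodule.mem_inf.mpr ⟨?_, ?_⟩
      · intro ω ω' h
        have h2 := restr_sub_congr (K_subset_Ic I J) h
        rw [hginddef]
        simp only [h2]
      · intro ω ω' h
        have h2 := restr_sub_congr (K_subset_Jc I J) h
        rw [hginddef]
        simp only [h2]
    have hip0 : ip X v gind = 0 := hvO gind hgmem
    have hexp : ip X v gind = ∑ α : PAssign U (I ∪ J)ᶜ, ∑ τI : PAssign U I,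
        ∑ τJ : PAssign U J, X.π (glue I J τI τJ α) * vF α τI
          * (if α = α₀ then (1:ℝ) else 0) := by
      unfold ip
      have hterm : ∀ ω : {ω // ω ∈ X.Ω}, X.π ω.1 * v ω * gind ω
          = X.π ω.1 * (vF (restr (I ∪ J)ᶜ ω.1) (restr I ω.1)
              * (if restr (I ∪ J)ᶜ ω.1 = α₀ then (1:ℝ) else 0)) := by
        intro ω
        rw [hvF ω, hginddef]
        ring
      rw [Finset.sum_congr rfl fun ω _ => hterm ω,
        sum_pi_mul X (fun ω => vF (restr (I ∪ J)ᶜ ω) (restr I ω)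
          * (if restr (I ∪ J)ᶜ ω = α₀ then (1:ℝ) else 0)), sum_glue' I J hIJ]
      refine Finset.sum_congr rfl fun α _ => Finset.sum_congr rfl fun τI _ =>
        Finset.sum_congr rfl fun τJ _ => ?_
      rw [restr_glue_K, restr_glue_I]
      ring
    have hcollapse : ∀ α : PAssign U (I ∪ J)ᶜ,
        (∑ τI : PAssign U I, ∑ τJ : PAssign U J, X.π (glue I J τI τJ α) * vF α τI
            * (if α = α₀ then (1:ℝ) else 0))
          = if α = α₀ then (∑ τI : PAssign U I, gI X I J α τI * vF α τI) else 0 := by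
      intro α
      split_ifs with h
      · simp only [mul_one]
        refine Finset.sum_congr rfl fun τI _ => ?_
        rw [← Finset.sum_mul]
        rfl
      · simp only [mul_zero]
        simp
    rw [hexp, Finset.sum_congr rfl fun α _ => hcollapse α] at hip0
    simpa using hip0
  have hu0 : ∀ α₀ : PAssign U (I ∪ J)ᶜ,
      (∑ τJ : PAssign U J, gJ X I J α₀ τJ * uF α₀ τJ) = 0 := by
    intro α₀
    set gind : {ω // ω ∈ X.Ω} → ℝ :=
      fun ω => if restr (I ∪ J)ᶜ ω.1 = α₀ then 1 else 0 with hginddef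
    have hgmem : gind ∈ Uinv X I ⊓ Uinv X J := by
      refine Submodule.mem_inf.mpr ⟨?_, ?_⟩
      · intro ω ω' h
        have h2 := restr_sub_congr (K_subset_Ic I J) h
        rw [hginddef]
        simp only [h2]
      · intro ω ω' h
        have h2 := restr_sub_congr (K_subset_Jc I J) h
        rw [hginddef]
        simp only [h2]
    have hip0 : ip X u gind = 0 := huO gind hgmem
    have hexp : ip X u gind = ∑ α : PAssign U (I ∪ J)ᶜ, ∑ τI : PAssign U I,
        ∑ τJ : PAssign U J, X.π (glue I J τI τJ α) * uF α τJ
          * (if α = α₀ then (1:ℝ) else 0) := by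
      unfold ip
      have hterm : ∀ ω : {ω // ω ∈ X.Ω}, X.π ω.1 * u ω * gind ω
          = X.π ω.1 * (uF (restr (I ∪ J)ᶜ ω.1) (restr J ω.1)
              * (if restr (I ∪ J)ᶜ ω.1 = α₀ then (1:ℝ) else 0)) := by
        intro ω
        rw [huF ω, hginddef]
        ring
      rw [Finset.sum_congr rfl fun ω _ => hterm ω,
        sum_pi_mul X (fun ω => uF (restr (I ∪ J)ᶜ ω) (restr J ω)
          * (if restr (I ∪ J)ᶜ ω = α₀ then (1:ℝ) else 0)), sum_glue' I J hIJ]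
      refine Finset.sum_congr rfl fun α _ => Finset.sum_congr rfl fun τI _ =>
        Finset.sum_congr rfl fun τJ _ => ?_
      rw [restr_glue_K, restr_glue_J I J hIJ]
      ring
    have hcollapse : ∀ α : PAssign U (I ∪ J)ᶜ,
        (∑ τI : PAssign U I, ∑ τJ : PAssign U J, X.π (glue I J τI τJ α) * uF α τJ
            * (if α = α₀ then (1:ℝ) else 0))
          = if α = α₀ then (∑ τJ : PAssign U J, gJ X I J α τJ * uF α τJ) else 0 := by
      intro α
      split_ifs with h
      · simp only [mul_one]
        rw [Finset.sum_comm]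
        refine Finset.sum_congr rfl fun τJ _ => ?_
        rw [← Finset.sum_mul]
        rfl
      · simp only [mul_zero]
        simp
    rw [hexp, Finset.sum_congr rfl fun α _ => hcollapse α] at hip0
    simpa using hip0
  -- per-α bound and conclusion
  set A : PAssign U (I ∪ J)ᶜ → ℝ := fun α => ∑ τI : PAssign U I,
    gI X I J α τI * vF α τI ^ 2 with hAdef
  set B : PAssign U (I ∪ J)ᶜ → ℝ := fun α => ∑ τJ : PAssign U J,
    gJ X I J α τJ * uF α τJ ^ 2 with hBdef
  have hAnn : ∀ α, 0 ≤ A α := fun α => Finset.sum_nonneg fun τI _ =>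
    mul_nonneg (gI_nonneg X I J α τI) (sq_nonneg _)
  have hBnn : ∀ α, 0 ≤ B α := fun α => Finset.sum_nonneg fun τJ _ =>
    mul_nonneg (gJ_nonneg X I J α τJ) (sq_nonneg _)
  have hblock : ∀ α : PAssign U (I ∪ J)ᶜ,
      (∑ τI : PAssign U I, ∑ τJ : PAssign U J,
          X.π (glue I J τI τJ α) * vF α τI * uF α τJ)
        ≤ epsIJ X I J * (Real.sqrt (A α) * Real.sqrt (B α)) := by
    intro α
    by_cases hmα : 0 < gm X I J α
    · have h := block_bound X I J hIJ α (vF α) (uF α) hmα (hv0 α) (hu0 α)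
      calc (∑ τI : PAssign U I, ∑ τJ : PAssign U J,
              X.π (glue I J τI τJ α) * vF α τI * uF α τJ)
          ≤ sigma2C X (I ∪ J)ᶜ I J α * Real.sqrt (A α) * Real.sqrt (B α) := h
        _ ≤ epsIJ X I J * Real.sqrt (A α) * Real.sqrt (B α) :=
            mul_le_mul_of_nonneg_right (mul_le_mul_of_nonneg_right (hσε α hmα)
              (Real.sqrt_nonneg _)) (Real.sqrt_nonneg _)
        _ = epsIJ X I J * (Real.sqrt (A α) * Real.sqrt (B α)) := mul_assoc _ _ _
    · have hm0 : gm X I J α = 0 := le_antisymm (not_lt.mp hmα) (gm_nonneg X I J α)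
      have hπ0 : ∀ τI τJ, X.π (glue I J τI τJ α) = 0 := fun τI τJ =>
        le_antisymm (le_trans (pi_le_gI X I J α τI τJ)
          (hm0 ▸ gI_le_gm X I J α τI)) (X.nonneg _)
      have hL : (∑ τI : PAssign U I, ∑ τJ : PAssign U J,
          X.π (glue I J τI τJ α) * vF α τI * uF α τJ) = 0 :=
        Finset.sum_eq_zero fun τI _ => Finset.sum_eq_zero fun τJ _ => by
          rw [hπ0 τI τJ, zero_mul, zero_mul]
      rw [hL]
      exact mul_nonneg hε0 (mul_nonneg (Real.sqrt_nonneg _) (Real.sqrt_nonneg _))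
  have hCS : (∑ α : PAssign U (I ∪ J)ᶜ, Real.sqrt (A α) * Real.sqrt (B α)) ≤ 1 := by
    have h := weighted_cs (fun _ : PAssign U (I ∪ J)ᶜ => (1:ℝ))
      (fun α => Real.sqrt (A α)) (fun α => Real.sqrt (B α)) (fun _ => zero_le_one)
    simp only [one_mul] at h
    have e1 : ∀ α, Real.sqrt (A α) ^ 2 = A α := fun α => Real.sq_sqrt (hAnn α)
    have e2 : ∀ α, Real.sqrt (B α) ^ 2 = B α := fun α => Real.sq_sqrt (hBnn α)
    simp only [e1, e2] at h
    rw [hipvv, hipuu, Real.sqrt_one, mul_one] at h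
    exact h
  calc ip X u v
      = ∑ α : PAssign U (I ∪ J)ᶜ, ∑ τI : PAssign U I, ∑ τJ : PAssign U J,
          X.π (glue I J τI τJ α) * vF α τI * uF α τJ := hipuv
    _ ≤ ∑ α : PAssign U (I ∪ J)ᶜ, epsIJ X I J * (Real.sqrt (A α) * Real.sqrt (B α)) :=
        Finset.sum_le_sum fun α _ => hblock α
    _ = epsIJ X I J * ∑ α : PAssign U (I ∪ J)ᶜ, Real.sqrt (A α) * Real.sqrt (B α) :=
        (Finset.mul_sum _ _ _).symm
    _ ≤ epsIJ X I J * 1 := mul_le_mul_of_nonneg_left hCS hε0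
    _ = epsIJ X I J := mul_one _

end PaperFormal
end
end

section
/- Let (X, π) be a link-connected weighted n-partite simplicial complex. For T ⊆ [n], let U_T ⊆ ℝ^Ω be the subspace of functions on the top faces depending only on the coordinates outside T, equivalently U_T = span{u_α : α ∈ Ω[[n]∖T]} where u_α(ω) = 1 if ω restricts to α on [n]∖T and 0 otherwise. Then U_T = ⋂_{t∈T} U_{{t}}. -/
open Finset
open scoped Classical

noncomputable section

namespace PaperFormal

variable {n : ℕ} {U : Fin n → Type*} [∀ i, Fintype (U i)] [∀ i, DecidableEq (U i)]

lemma pr_pos_of (X : WPC n U) {E : (∀ i, U i) → Prop} {ω₀ : ∀ i, U i}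
    (hω : ω₀ ∈ X.Ω) (hE : E ω₀) : 0 < pr X E := by
  have h0 : 0 < X.π ω₀ := (X.support ω₀).mpr hω
  refine Finset.sum_pos' (fun ω _ => ?_) ⟨ω₀, Finset.mem_univ _, ?_⟩
  · split
    · exact X.nonneg ω
    · exact le_refl 0
  · simp only [hE, if_true]; exact h0

lemma exists_of_pr_pos (X : WPC n U) {E : (∀ i, U i) → Prop}
    (h : 0 < pr X E) : ∃ ω, ω ∈ X.Ω ∧ E ω := by
  by_contra hc
  push_neg at hc
  have hz : pr X E = 0 := by
    refine Finset.sum_eq_zero fun ω _ => ?_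
    by_cases hE : E ω
    · simp only [hE, if_true]
      by_contra hπ
      have : 0 < X.π ω := lt_of_le_of_ne (X.nonneg ω) (Ne.symm hπ)
      exact hc ω ((X.support ω).mp this) hE
    · simp [hE]
  rw [hz] at h
  exact lt_irrefl 0 h

lemma uinv_invariance (X : WPC n U) (hconn : linkConnected X)
    (f : {ω // ω ∈ X.Ω} → ℝ) :
    ∀ (m : ℕ) (T : Finset (Fin n)), T.card = m → (∀ t ∈ T, f ∈ Uinv X {t}) →
      ∀ ω ω' : {ω // ω ∈ X.Ω}, restr Tᶜ ω.1 = restr Tᶜ ω'.1 → f ω = f ω' := by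
  intro m
  induction m using Nat.strong_induction_on with
  | _ m IH =>
    intro T hcard hf ω ω' hrestr
    by_cases hall : ∀ t ∈ T, ω.1 t = ω'.1 t
    · have heq : ω.1 = ω'.1 := funext fun i => by
        by_cases hi : i ∈ T
        · exact hall i hi
        · exact congrFun hrestr ⟨i, Finset.mem_compl.mpr hi⟩
      rw [Subtype.ext heq]
    · push_neg at hall
      obtain ⟨t, ht, hne⟩ := hall
      by_cases hT1 : T.card ≤ 1
      · have hTt : T = {t} := by
          apply Finset.eq_singleton_iff_unique_mem.mpr
          refine ⟨ht, fun b hb => ?_⟩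
          exact Finset.card_le_one.mp hT1 b hb t ht
        exact hf t ht ω ω' (by rw [hTt] at hrestr; exact hrestr)
      · push_neg at hT1
        have h2 : 2 ≤ T.card := hT1
        set S : Finset (Fin n) := Tᶜ with hS
        have hScard : S.card ≤ n - 2 := by
          have : S.card = n - T.card := by
            rw [hS, Finset.card_compl, Fintype.card_fin]
          rw [this]
          exact Nat.sub_le_sub_left h2 n
        set α : PAssign U S := restr S ω.1 with hα
        have hω'α : restr S ω'.1 = α := hrestr.symm
        have hmarg : 0 < marg X S α := pr_pos_of X ω.2 rfl
        have htS : t ∉ S := by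
          rw [hS]; exact fun hc => (Finset.mem_compl.mp hc) ht
        have hv : 0 < pr X (fun τ => restr S τ = α ∧ τ t = ω.1 t) :=
          pr_pos_of X ω.2 ⟨rfl, rfl⟩
        have hw : 0 < pr X (fun τ => restr S τ = α ∧ τ t = ω'.1 t) :=
          pr_pos_of X ω'.2 ⟨hω'α, rfl⟩
        obtain ⟨p⟩ := hconn S hScard α hmarg ⟨t, ω.1 t⟩ ⟨t, ω'.1 t⟩ htS htS hv hw
        have share : ∀ (ρ ρ' : {ω // ω ∈ X.Ω}) (t' : Fin n), t' ∉ S →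
            restr S ρ.1 = α → restr S ρ'.1 = α → ρ.1 t' = ρ'.1 t' → f ρ = f ρ' := by
          intro ρ ρ' t' ht'S hρ hρ' heq
          have ht'T : t' ∈ T := by
            by_contra hc
            exact ht'S (Finset.mem_compl.mpr hc)
          refine IH (T.erase t').card ?_ (T.erase t') rfl
            (fun s hs => hf s (Finset.mem_of_mem_erase hs)) ρ ρ' ?_
          · rw [Finset.card_erase_of_mem ht'T, hcard]
            omega
          · funext i
            by_cases hit : i.1 = t'
            · show ρ.1 i.1 = ρ'.1 i.1
              rw [hit]; exact heq
            · have hiT : i.1 ∉ T := by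
                have := Finset.mem_compl.mp i.2
                rw [Finset.mem_erase] at this
                push_neg at this
                exact this hit
              have hiS : i.1 ∈ S := Finset.mem_compl.mpr hiT
              show ρ.1 i.1 = ρ'.1 i.1
              have e1 : ρ.1 i.1 = α ⟨i.1, hiS⟩ := congrFun hρ ⟨i.1, hiS⟩
              have e2 : ρ'.1 i.1 = α ⟨i.1, hiS⟩ := congrFun hρ' ⟨i.1, hiS⟩
              rw [e1, e2]
        have walkind : ∀ (v w : (i : Fin n) × U i)
            (_ : (linkGraph X S α).Walk v w), w = ⟨t, ω'.1 t⟩ →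
            ∀ ρ : {ω // ω ∈ X.Ω}, restr S ρ.1 = α → v.1 ∉ S → ρ.1 v.1 = v.2 →
              f ρ = f ω' := by
          intro v w p
          induction p with
          | nil =>
            intro hw ρ hρ _ hρv
            subst hw
            exact share ρ ω' t htS hρ hω'α hρv
          | @cons a b c hadj q ih =>
            intro hw ρ hρ hvS hρv
            obtain ⟨hne', haS, hbS, hpos⟩ := hadj
            obtain ⟨τ, hτΩ, hτα, hτv, hτu⟩ := exists_of_pr_pos X hpos
            have h1 : f ρ = f ⟨τ, hτΩ⟩ :=
              share ρ ⟨τ, hτΩ⟩ a.1 hvS hρ hτα (by rw [hρv, ← hτv])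
            have h2 : f ⟨τ, hτΩ⟩ = f ω' := ih hw ⟨τ, hτΩ⟩ hτα hbS hτu
            rw [h1, h2]
        exact walkind ⟨t, ω.1 t⟩ ⟨t, ω'.1 t⟩ p rfl ω rfl htS rfl

lemma Uspan_eq_Uinv (X : WPC n U) (T : Finset (Fin n)) : Uspan X T = Uinv X T := by
  apply le_antisymm
  · apply Submodule.span_le.mpr
    rintro g ⟨α, rfl⟩
    intro ω ω' h
    simp only [uvec, h]
  · intro f hf
    have hf' : ∀ ω ω' : {ω // ω ∈ X.Ω}, restr Tᶜ ω.1 = restr Tᶜ ω'.1 → f ω = f ω' := hf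
    set c : PAssign U Tᶜ → ℝ := fun α =>
      if h : ∃ ω : {ω // ω ∈ X.Ω}, restr Tᶜ ω.1 = α then f h.choose else 0 with hc
    have hfe : f = ∑ α : PAssign U Tᶜ, c α • uvec X T α := by
      funext ω
      rw [Finset.sum_apply]
      simp only [Pi.smul_apply, uvec, smul_eq_mul, mul_ite, mul_one, mul_zero]
      rw [Finset.sum_ite_eq, if_pos (Finset.mem_univ _)]
      have hex : ∃ ω' : {ω // ω ∈ X.Ω}, restr Tᶜ ω'.1 = restr Tᶜ ω.1 := ⟨ω, rfl⟩
      rw [hc]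
      simp only [dif_pos hex]
      exact (hf' hex.choose ω hex.choose_spec).symm
    rw [hfe]
    exact Submodule.sum_mem _ fun α _ =>
      Submodule.smul_mem _ _ (Submodule.subset_span ⟨α, rfl⟩)

theorem Uspan_eq_iInf
    (X : WPC n U) (hconn : linkConnected X) (T : Finset (Fin n)) :
    Uspan X T = ⨅ t ∈ T, Uspan X {t} := by
  apply le_antisymm
  · refine le_iInf fun t => le_iInf fun ht => ?_
    rw [Uspan_eq_Uinv, Uspan_eq_Uinv]
    intro f hf ω ω' h
    apply hf
    funext i
    have hit : i.1 ∈ ({t} : Finset (Fin n))ᶜ := by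
      simp only [Finset.mem_compl, Finset.mem_singleton]
      intro hc
      exact (Finset.mem_compl.mp i.2) (hc ▸ ht)
    exact congrFun h ⟨i.1, hit⟩
  · intro f hf
    rw [Uspan_eq_Uinv]
    have hmem : ∀ t ∈ T, f ∈ Uinv X {t} := by
      intro t ht
      rw [← Uspan_eq_Uinv]
      have := Submodule.mem_iInf (fun t => ⨅ _ : t ∈ T, Uspan X {t}) |>.mp hf t
      exact (Submodule.mem_iInf _).mp this ht
    exact fun ω ω' h => uinv_invariance X hconn f T.card T rfl hmem ω ω' h

end PaperFormal
end
end
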